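/- The bounded operator B_W := Σ_{i=1}^d (U_i·W̃·(S_i*−S_i) − (S_i*−S_i)·W̃·U_i) on ℓ²(ℤ^d) is NOT a compact operator. -/

import Mathlib

noncomputable section

open scoped ENNReal

/-- The Hilbert space ℓ²(ℤ^d). -/
abbrev l2Zd (d : ℕ) : Type := lp (fun _ : Fin d → ℤ => ℂ) 2

/-- W̃(n) = q·sin(k(n₁+…+n_d)). -/
def WvNt (d : ℕ) (q k : ℝ) (n : Fin d → ℤ) : ℝ := q * Real.sin (k * ∑ i, (n i : ℝ))

/-- U_i(n) = n_i/|n|, with U_i(0) = 0. -/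
def Ufun (d : ℕ) (i : Fin d) (n : Fin d → ℤ) : ℝ :=
  if n = 0 then 0 else (n i : ℝ) / Real.sqrt (∑ j, (n j : ℝ) ^ 2)

/-- B_W = Σ_i (U_i·W̃·(S_i*−S_i) − (S_i*−S_i)·W̃·U_i), acting on functions. -/
def BWfun (d : ℕ) (q k : ℝ) (u : (Fin d → ℤ) → ℂ) (n : Fin d → ℤ) : ℂ :=
  ∑ i : Fin d,
    ((Ufun d i n : ℂ) * (WvNt d q k n : ℂ) *
        (u (Function.update n i (n i + 1)) - u (Function.update n i (n i - 1))) -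
      ((WvNt d q k (Function.update n i (n i + 1)) : ℂ) *
          (Ufun d i (Function.update n i (n i + 1)) : ℂ) * u (Function.update n i (n i + 1)) -
        (WvNt d q k (Function.update n i (n i - 1)) : ℂ) *
          (Ufun d i (Function.update n i (n i - 1)) : ℂ) * u (Function.update n i (n i - 1))))

namespace BWaux

variable {d : ℕ}

/-- The lattice point with value `c` in coordinate `e0` and `0` elsewhere. -/
def pfun (e0 : Fin d) (c : ℤ) : Fin d → ℤ := fun j => if j = e0 then c else 0

lemma pfun_apply_self (e0 : Fin d) (c : ℤ) : pfun e0 c e0 = c := if_pos rfl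

lemma pfun_apply_ne (e0 : Fin d) (c : ℤ) {j : Fin d} (h : j ≠ e0) : pfun e0 c j = 0 := if_neg h

lemma pfun_update (e0 : Fin d) (c v : ℤ) : Function.update (pfun e0 c) e0 v = pfun e0 v := by
  funext j
  by_cases h : j = e0 <;> simp [Function.update_apply, pfun, h]

lemma pfun_inj {e0 : Fin d} {c c' : ℤ} (h : pfun e0 c = pfun e0 c') : c = c' := by
  simpa [pfun] using congrFun h e0

lemma pfun_ne_zero {e0 : Fin d} {c : ℤ} (hc : c ≠ 0) : pfun e0 c ≠ 0 := by
  intro h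
  exact hc (by simpa [pfun] using congrFun h e0)

lemma sum_pfun (e0 : Fin d) (c : ℤ) : (∑ j, ((pfun e0 c j : ℤ) : ℝ)) = (c : ℝ) := by
  have : ∀ j : Fin d, ((pfun e0 c j : ℤ) : ℝ) = if j = e0 then (c : ℝ) else 0 := by
    intro j; by_cases h : j = e0 <;> simp [pfun, h]
  rw [Finset.sum_congr rfl fun j _ => this j]
  simp

lemma sumsq_pfun (e0 : Fin d) (c : ℤ) : (∑ j, ((pfun e0 c j : ℤ) : ℝ) ^ 2) = (c : ℝ) ^ 2 := by
  have : ∀ j : Fin d, ((pfun e0 c j : ℤ) : ℝ) ^ 2 = if j = e0 then (c : ℝ) ^ 2 else 0 := by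
    intro j; by_cases h : j = e0 <;> simp [pfun, h]
  rw [Finset.sum_congr rfl fun j _ => this j]
  simp

lemma Ufun_pfun (e0 : Fin d) {c : ℤ} (hc : 0 < c) : Ufun d e0 (pfun e0 c) = 1 := by
  rw [Ufun, if_neg (pfun_ne_zero hc.ne')]
  rw [sumsq_pfun, Real.sqrt_sq (by exact_mod_cast hc.le), pfun_apply_self]
  rw [div_self (by exact_mod_cast hc.ne')]

lemma WvNt_pfun (q k : ℝ) (e0 : Fin d) (c : ℤ) :
    WvNt d q k (pfun e0 c) = q * Real.sin (k * (c : ℝ)) := by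
  rw [WvNt, sum_pfun]

/-- Vanishing of `BWfun` applied to a delta function away from its neighborhood. -/
lemma BWfun_vanish (q k : ℝ) (c0 : ℂ) (b n : Fin d → ℤ)
    (h : ∀ i : Fin d, Function.update n i (n i + 1) ≠ b ∧ Function.update n i (n i - 1) ≠ b) :
    BWfun d q k (fun p => if p = b then c0 else 0) n = 0 := by
  rw [BWfun]
  apply Finset.sum_eq_zero
  intro i _
  rw [if_neg (h i).1, if_neg (h i).2]
  ring

/-- Evaluation at the site just below the delta. -/
lemma BWfun_eval_minus (q k : ℝ) (e0 : Fin d) (c0 : ℂ) (s : ℤ) (hs : 2 ≤ s) :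
    BWfun d q k (fun p => if p = pfun e0 s then c0 else 0) (pfun e0 (s - 1)) =
      c0 * (((q * Real.sin (k * ((s : ℝ) - 1)) - q * Real.sin (k * (s : ℝ))) : ℝ) : ℂ) := by
  rw [BWfun]
  rw [Finset.sum_eq_single e0]
  · simp only [pfun_apply_self, pfun_update]
    have e1 : s - 1 + 1 = s := by ring
    rw [e1]
    rw [if_pos rfl, if_neg (fun h => by have := pfun_inj h; omega)]
    rw [Ufun_pfun e0 (by omega : (0:ℤ) < s - 1), Ufun_pfun e0 (by omega : (0:ℤ) < s),
      WvNt_pfun, WvNt_pfun, WvNt_pfun]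
    push_cast
    ring
  · intro i _ hi
    have h1 : Function.update (pfun e0 (s - 1)) i (pfun e0 (s - 1) i + 1) ≠ pfun e0 s := by
      intro h
      have := congrFun h i
      rw [Function.update_self, pfun_apply_ne _ _ hi, pfun_apply_ne _ _ hi] at this
      omega
    have h2 : Function.update (pfun e0 (s - 1)) i (pfun e0 (s - 1) i - 1) ≠ pfun e0 s := by
      intro h
      have := congrFun h i
      rw [Function.update_self, pfun_apply_ne _ _ hi, pfun_apply_ne _ _ hi] at this
      omega
    rw [if_neg h1, if_neg h2]
    ring
  · intro h
    exact absurd (Finset.mem_univ e0) h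

/-- Evaluation at the site just above the delta. -/
lemma BWfun_eval_plus (q k : ℝ) (e0 : Fin d) (c0 : ℂ) (s : ℤ) (hs : 2 ≤ s) :
    BWfun d q k (fun p => if p = pfun e0 s then c0 else 0) (pfun e0 (s + 1)) =
      c0 * (((q * Real.sin (k * (s : ℝ)) - q * Real.sin (k * ((s : ℝ) + 1))) : ℝ) : ℂ) := by
  rw [BWfun]
  rw [Finset.sum_eq_single e0]
  · simp only [pfun_apply_self, pfun_update]
    have e1 : s + 1 - 1 = s := by ring
    rw [e1]
    rw [if_neg (fun h => by have := pfun_inj h; omega), if_pos rfl]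
    rw [Ufun_pfun e0 (by omega : (0:ℤ) < s + 1), Ufun_pfun e0 (by omega : (0:ℤ) < s),
      WvNt_pfun, WvNt_pfun, WvNt_pfun]
    push_cast
    ring
  · intro i _ hi
    have h1 : Function.update (pfun e0 (s + 1)) i (pfun e0 (s + 1) i + 1) ≠ pfun e0 s := by
      intro h
      have := congrFun h i
      rw [Function.update_self, pfun_apply_ne _ _ hi, pfun_apply_ne _ _ hi] at this
      omega
    have h2 : Function.update (pfun e0 (s + 1)) i (pfun e0 (s + 1) i - 1) ≠ pfun e0 s := by
      intro h
      have := congrFun h i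
      rw [Function.update_self, pfun_apply_ne _ _ hi, pfun_apply_ne _ _ hi] at this
      omega
    rw [if_neg h1, if_neg h2]
    ring
  · intro h
    exact absurd (Finset.mem_univ e0) h

/-- The key trigonometric lower bound. -/
lemma trig_lb (k θ : ℝ) (hck : Real.cos k ≤ 1) :
    min |Real.sin k| (1 - Real.cos k) ≤
      |Real.sin (θ + k) - Real.sin θ| + |Real.sin θ - Real.sin (θ - k)| := by
  set c1 := Real.sin (θ + k) - Real.sin θ with hc1
  set c2 := Real.sin θ - Real.sin (θ - k) with hc2
  have h1 : c1 + c2 = 2 * Real.cos θ * Real.sin k := by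
    rw [hc1, hc2, Real.sin_add, Real.sin_sub]; ring
  have h2 : c1 - c2 = -(2 * Real.sin θ * (1 - Real.cos k)) := by
    rw [hc1, hc2, Real.sin_add, Real.sin_sub]; ring
  have hb : 1 ≤ |Real.cos θ| + |Real.sin θ| := by
    nlinarith [Real.sin_sq_add_cos_sq θ, abs_nonneg (Real.sin θ), abs_nonneg (Real.cos θ),
      sq_abs (Real.sin θ), sq_abs (Real.cos θ)]
  have e1 : 2 * |Real.cos θ| * |Real.sin k| ≤ |c1| + |c2| := by
    calc 2 * |Real.cos θ| * |Real.sin k| = |2 * Real.cos θ * Real.sin k| := by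
          rw [abs_mul, abs_mul, abs_two]
      _ = |c1 + c2| := by rw [h1]
      _ ≤ |c1| + |c2| := abs_add_le _ _
  have e2 : 2 * |Real.sin θ| * (1 - Real.cos k) ≤ |c1| + |c2| := by
    calc 2 * |Real.sin θ| * (1 - Real.cos k) = |-(2 * Real.sin θ * (1 - Real.cos k))| := by
          rw [abs_neg, abs_mul, abs_mul, abs_two, abs_of_nonneg (by linarith : (0:ℝ) ≤ 1 - Real.cos k)]
      _ = |c1 - c2| := by rw [h2]
      _ ≤ |c1| + |c2| := abs_sub _ _
  have hm1 : min |Real.sin k| (1 - Real.cos k) ≤ |Real.sin k| := min_le_left _ _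
  have hm2 : min |Real.sin k| (1 - Real.cos k) ≤ 1 - Real.cos k := min_le_right _ _
  have hm0 : 0 ≤ min |Real.sin k| (1 - Real.cos k) :=
    le_min (abs_nonneg _) (by linarith)
  nlinarith [mul_le_mul_of_nonneg_left hm1 (abs_nonneg (Real.cos θ)),
    mul_le_mul_of_nonneg_left hm2 (abs_nonneg (Real.sin θ)),
    mul_le_mul_of_nonneg_left hb hm0]

end BWaux

open BWaux in
/-- The bounded operator B_W on ℓ²(ℤ^d) is NOT compact. -/
theorem BW_not_compact (d : ℕ) (hd : 1 ≤ d) (q : ℝ) (hq : q ≠ 0) (k : ℝ)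
    (hk : ∀ m : ℤ, k ≠ m * Real.pi)
    (BW : l2Zd d →L[ℂ] l2Zd d)
    (hBW : ∀ (u : l2Zd d) (n : Fin d → ℤ), (BW u) n = BWfun d q k (⇑u) n) :
    ¬ IsCompactOperator (⇑BW) := by
  intro hcomp
  obtain ⟨K, hKc, hKn⟩ := hcomp
  obtain ⟨ε, hε, hball⟩ := Metric.mem_nhds_iff.mp hKn
  set e0 : Fin d := ⟨0, hd⟩ with he0
  -- basic trigonometric constants
  have hsk : Real.sin k ≠ 0 := by
    intro h
    obtain ⟨n, hn⟩ := Real.sin_eq_zero_iff.mp h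
    exact hk n hn.symm
  have hck : Real.cos k < 1 := by
    rcases lt_or_eq_of_le (Real.cos_le_one k) with h | h
    · exact h
    · exact absurd (by nlinarith [Real.sin_sq_add_cos_sq k] : Real.sin k = 0) hsk
  set μ : ℝ := min |Real.sin k| (1 - Real.cos k) with hμdef
  have hμ : 0 < μ := lt_min (abs_pos.mpr hsk) (by linarith)
  set c0 : ℂ := ((ε / 2 : ℝ) : ℂ) with hc0
  set D : ℝ := ε / 2 * |q| * (μ / 2) with hD
  have hDpos : 0 < D := by
    have : 0 < |q| := abs_pos.mpr hq
    positivity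
  -- the sequence of unit-scaled delta functions
  set sfun : ℕ → ℤ := fun m => 4 * (m : ℤ) + 4 with hsfun
  set x : ℕ → l2Zd d := fun m => lp.single 2 (pfun e0 (sfun m)) c0 with hx
  have hxcoe : ∀ m, ⇑(x m) = fun p => if p = pfun e0 (sfun m) then c0 else 0 := by
    intro m
    funext p
    by_cases h : p = pfun e0 (sfun m)
    · subst h; simp [hx, lp.single_apply_self]
    · simp [hx, lp.single_apply_ne _ _ _ h, h]
  have hxnorm : ∀ m, ‖x m‖ = ε / 2 := by
    intro m
    have h := lp.norm_single (p := 2) (E := fun _ : Fin d → ℤ => ℂ) (by norm_num)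
      (pfun e0 (sfun m)) c0
    rw [hx, h, hc0, Complex.norm_real, Real.norm_eq_abs,
      abs_of_nonneg (by linarith : (0:ℝ) ≤ ε / 2)]
  have hxK : ∀ m, BW (x m) ∈ K := by
    intro m
    apply hball
    rw [Metric.mem_ball, dist_zero_right, hxnorm m]
    linarith
  -- pairwise separation of the images
  have hsep : ∀ m m' : ℕ, m ≠ m' → D ≤ dist (BW (x m)) (BW (x m')) := by
    intro m m' hmm
    have hs2 : (2 : ℤ) ≤ sfun m := by simp only [hsfun]; omega
    -- values of BW (x m') at the two sites near pfun e0 (sfun m) vanish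
    have hvanish : ∀ c : ℤ, c = sfun m - 1 ∨ c = sfun m + 1 →
        BWfun d q k (⇑(x m')) (pfun e0 c) = 0 := by
      intro c hc
      rw [hxcoe m']
      apply BWfun_vanish
      intro i
      constructor <;> intro h <;> have h0 := congrFun h e0 <;>
        rw [Function.update_apply] at h0
      · by_cases hie : e0 = i
        · rw [if_pos hie, ← hie, pfun_apply_self, pfun_apply_self] at h0
          simp only [hsfun] at hc h0; omega
        · rw [if_neg hie, pfun_apply_self, pfun_apply_self] at h0
          simp only [hsfun] at hc h0; omega
      · by_cases hie : e0 = i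
        · rw [if_pos hie, ← hie, pfun_apply_self, pfun_apply_self] at h0
          simp only [hsfun] at hc h0; omega
        · rw [if_neg hie, pfun_apply_self, pfun_apply_self] at h0
          simp only [hsfun] at hc h0; omega
    -- values of BW (x m) at the two sites
    set s : ℤ := sfun m with hsdef
    have hvminus : (BW (x m)) (pfun e0 (s - 1)) =
        c0 * (((q * Real.sin (k * ((s : ℝ) - 1)) - q * Real.sin (k * (s : ℝ))) : ℝ) : ℂ) := by
      rw [hBW, hxcoe m]
      exact BWfun_eval_minus q k e0 c0 s hs2
    have hvplus : (BW (x m)) (pfun e0 (s + 1)) =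
        c0 * (((q * Real.sin (k * (s : ℝ)) - q * Real.sin (k * ((s : ℝ) + 1))) : ℝ) : ℂ) := by
      rw [hBW, hxcoe m]
      exact BWfun_eval_plus q k e0 c0 s hs2
    -- lower bound from the trig inequality
    have htrig := trig_lb k (k * (s : ℝ)) (Real.cos_le_one k)
    have heq1 : k * (s : ℝ) + k = k * ((s : ℝ) + 1) := by ring
    have heq2 : k * (s : ℝ) - k = k * ((s : ℝ) - 1) := by ring
    rw [heq1, heq2] at htrig
    -- one of the two sites gives a value of modulus at least (ε/2)·|q|·(μ/2)
    set A : ℝ := Real.sin (k * ((s : ℝ) + 1)) - Real.sin (k * (s : ℝ)) with hA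
    set B : ℝ := Real.sin (k * (s : ℝ)) - Real.sin (k * ((s : ℝ) - 1)) with hB
    have hAB : μ ≤ |A| + |B| := htrig
    have key : ∀ site : Fin d → ℤ, (BW (x m')) site = 0 →
        D ≤ ‖(BW (x m)) site‖ → D ≤ dist (BW (x m)) (BW (x m')) := by
      intro site hz hlb
      rw [dist_eq_norm]
      refine le_trans ?_ (lp.norm_apply_le_norm (by norm_num) (BW (x m) - BW (x m')) site)
      have : (BW (x m) - BW (x m')) site = (BW (x m)) site - (BW (x m')) site := by
        rw [lp.coeFn_sub, Pi.sub_apply]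
      rw [this, hz, sub_zero]
      exact hlb
    have hnorm_minus : ‖(BW (x m)) (pfun e0 (s - 1))‖ = ε / 2 * (|q| * |B|) := by
      rw [hvminus, norm_mul, hc0, Complex.norm_real, Complex.norm_real,
        Real.norm_eq_abs, Real.norm_eq_abs, abs_of_nonneg (by linarith : (0:ℝ) ≤ ε / 2)]
      have : q * Real.sin (k * ((s : ℝ) - 1)) - q * Real.sin (k * (s : ℝ)) = -(q * B) := by
        rw [hB]; ring
      rw [this, abs_neg, abs_mul]
    have hnorm_plus : ‖(BW (x m)) (pfun e0 (s + 1))‖ = ε / 2 * (|q| * |A|) := by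
      rw [hvplus, norm_mul, hc0, Complex.norm_real, Complex.norm_real,
        Real.norm_eq_abs, Real.norm_eq_abs, abs_of_nonneg (by linarith : (0:ℝ) ≤ ε / 2)]
      have : q * Real.sin (k * (s : ℝ)) - q * Real.sin (k * ((s : ℝ) + 1)) = -(q * A) := by
        rw [hA]; ring
      rw [this, abs_neg, abs_mul]
    rcases le_total |A| |B| with hab | hab
    · -- |B| ≥ μ/2, use the minus site
      have hBlb : μ / 2 ≤ |B| := by linarith
      refine key (pfun e0 (s - 1)) ?_ ?_
      · rw [hBW]; exact hvanish (s - 1) (Or.inl rfl)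
      · rw [hnorm_minus, hD]
        have hq' : 0 ≤ |q| := abs_nonneg q
        have := mul_le_mul_of_nonneg_left hBlb hq'
        nlinarith
    · -- |A| ≥ μ/2, use the plus site
      have hAlb : μ / 2 ≤ |A| := by linarith
      refine key (pfun e0 (s + 1)) ?_ ?_
      · rw [hBW]; exact hvanish (s + 1) (Or.inr rfl)
      · rw [hnorm_plus, hD]
        have hq' : 0 ≤ |q| := abs_nonneg q
        have := mul_le_mul_of_nonneg_left hAlb hq'
        nlinarith
  -- contradiction with total boundedness of K
  obtain ⟨t, htf, htc⟩ := Metric.totallyBounded_iff.mp hKc.totallyBounded (D / 3)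
    (by positivity)
  have hex : ∀ m : ℕ, ∃ y ∈ t, BW (x m) ∈ Metric.ball y (D / 3) := by
    intro m
    have := htc (hxK m)
    simpa using this
  choose f hf hfb using hex
  obtain ⟨m, -, m', -, hne, heq⟩ :=
    Set.Infinite.exists_ne_map_eq_of_mapsTo (Set.infinite_univ (α := ℕ))
      (fun m _ => hf m) htf
  have hlt : dist (BW (x m)) (BW (x m')) < D := by
    have h1 := Metric.mem_ball.mp (hfb m)
    have h2 := Metric.mem_ball.mp (hfb m')
    calc dist (BW (x m)) (BW (x m')) ≤ dist (BW (x m)) (f m) + dist (f m) (BW (x m')) :=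
          dist_triangle _ _ _
      _ = dist (BW (x m)) (f m) + dist (BW (x m')) (f m') := by rw [heq, dist_comm (f m') (BW (x m'))]
      _ < D / 3 + D / 3 := by exact add_lt_add h1 h2
      _ < D := by linarith
  exact absurd (hsep m m' hne) (not_le.mpr hlt)
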